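/- Let (L, ∨, ∧, ') be a dually weakly orthomodular lattice and define x ⊙ y := (x ∨ y') ∧ y and x → y := x' ∨ (x ∧ y). Then for all a, b, c ∈ L, a ≤ b → c implies a ⊙ b ≤ c. -/
import Mathlib

/-- In a dually weakly orthomodular lattice with x ⊙ y := (x ⊔ y') ⊓ y and x → y := x' ⊔ (x ⊓ y),
a ≤ b → c implies a ⊙ b ≤ c. -/
theorem stmt_18 {L : Type*} [Lattice L] (f : L → L)
    (dwom : ∀ x y : L, (x ⊔ y) ⊓ (x ⊔ f (x ⊔ y)) = x) :
    ∀ a b c : L, a ≤ f b ⊔ (b ⊓ c) → (a ⊔ f b) ⊓ b ≤ c := by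
  intro a b c h
  have hb : (b ⊓ c) ⊔ b = b := sup_eq_right.mpr inf_le_left
  have key := dwom (b ⊓ c) b
  rw [hb] at key
  have h1 : (a ⊔ f b) ⊓ b ≤ b ⊓ ((b ⊓ c) ⊔ f b) := by
    apply le_inf inf_le_right
    calc (a ⊔ f b) ⊓ b ≤ a ⊔ f b := inf_le_left
      _ ≤ (f b ⊔ (b ⊓ c)) ⊔ f b := sup_le_sup_right h _
      _ = (b ⊓ c) ⊔ f b := by rw [sup_comm (f b) (b ⊓ c), sup_assoc, sup_idem]
  calc (a ⊔ f b) ⊓ b ≤ b ⊓ ((b ⊓ c) ⊔ f b) := h1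
    _ = b ⊓ c := key
    _ ≤ c := inf_le_right
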